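/- Let M be a von Neumann algebra with a projection P having core 0 and central carrier I, and let ξ ≠ 1 be a scalar. Let L : M → M be an additive map satisfying L(AB − ξBA) = L(A)B − ξBL(A) + L(B)A − ξAL(B) whenever AB = 0. Then PL(I)(I−P) = 0, (I−P)L(I)P = 0, (I−P)L(P)(I−P) = 0, and PL(I−P)P = 0. -/

import Mathlib

variable {H : Type*} [NormedAddCommGroup H] [InnerProductSpace ℂ H] [CompleteSpace H]

/-- `Z` lies in the center of the von Neumann algebra `M`. -/
def VonNeumannAlgebra.IsCentral (M : VonNeumannAlgebra H) (Z : H →L[ℂ] H) : Prop :=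
  Z ∈ M ∧ ∀ A ∈ M, Z * A = A * Z

/-- `P` is a projection (self-adjoint idempotent) in `M`. -/
def VonNeumannAlgebra.IsProjection (M : VonNeumannAlgebra H) (P : H →L[ℂ] H) : Prop :=
  P ∈ M ∧ P * P = P ∧ star P = P

/-- `Q` is a central projection of `M`. -/
def VonNeumannAlgebra.IsCentralProjection (M : VonNeumannAlgebra H) (Q : H →L[ℂ] H) : Prop :=
  M.IsCentral Q ∧ Q * Q = Q ∧ star Q = Q

/-- The core of the projection `P` (the largest central projection below `P`) is zero,
i.e. the only central projection `Q` with `Q ≤ P` (equivalently `Q * P = Q`) is `0`. -/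
def VonNeumannAlgebra.CoreZero (M : VonNeumannAlgebra H) (P : H →L[ℂ] H) : Prop :=
  ∀ Q : H →L[ℂ] H, M.IsCentralProjection Q → Q * P = Q → Q = 0

/-- The central carrier of the projection `P` (the smallest central projection above `P`)
is `1`, i.e. the only central projection `Q` with `Q * P = P` is `1`. -/
def VonNeumannAlgebra.CarrierOne (M : VonNeumannAlgebra H) (P : H →L[ℂ] H) : Prop :=
  ∀ Q : H →L[ℂ] H, M.IsCentralProjection Q → Q * P = P → Q = 1

/-- `M` has no central summand of type I₁: equivalently, `M` contains a projection
with core `0` and central carrier `1`. -/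
def VonNeumannAlgebra.NoTypeI1 (M : VonNeumannAlgebra H) : Prop :=
  ∃ P : H →L[ℂ] H, M.IsProjection P ∧ M.CoreZero P ∧ M.CarrierOne P

/-- For `e ∈ M` there is a central projection `C` of `M` (the central carrier of `e`)
with `C * e = e`, killed by any operator annihilating `M * e`. -/
theorem VonNeumannAlgebra.exists_central_carrier (M : VonNeumannAlgebra H)
    (e : H →L[ℂ] H) (he : e ∈ M) :
    ∃ C : H →L[ℂ] H, M.IsCentralProjection C ∧ C * e = e ∧
      ∀ Z : H →L[ℂ] H, (∀ X ∈ M, Z * (X * e) = 0) → Z * C = 0 := by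
  classical
  set S : Set H := {y | ∃ X ∈ M, ∃ h : H, (X * e) h = y} with hS
  set K : Submodule ℂ H := (Submodule.span ℂ S).topologicalClosure with hK
  haveI : CompleteSpace K := by rw [hK]; exact Submodule.topologicalClosure.completeSpace _
  set C : H →L[ℂ] H := K.subtypeL ∘L K.orthogonalProjectionOnto with hC
  have hCapply : ∀ h : H, C h = (K.orthogonalProjectionOnto h : H) := fun h => rfl
  have hmemK : ∀ X ∈ M, ∀ h : H, (X * e) h ∈ K := fun X hX h => by
    rw [hK]
    exact (Submodule.span ℂ S).le_topologicalClosure (Submodule.subset_span ⟨X, hX, h, rfl⟩)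
  have hCfix : ∀ x ∈ K, C x = x := fun x hx => by
    rw [hCapply]; exact Submodule.starProjection_eq_self_iff.mpr hx
  have hChmem : ∀ h : H, C h ∈ K := fun h => by
    rw [hCapply]; exact Submodule.coe_mem _
  have hCzero : ∀ x ∈ Kᗮ, C x = 0 := fun x hx => by
    rw [hCapply, Submodule.orthogonalProjectionOnto_apply_of_mem_orthogonal hx,
      Submodule.coe_zero]
  have hKinv : ∀ T : H →L[ℂ] H, (∀ y ∈ S, T y ∈ K) → ∀ x ∈ K, T x ∈ K := by
    intro T hT x hx
    have h1 : Submodule.span ℂ S ≤ K.comap (T : H →ₗ[ℂ] H) := by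
      rw [Submodule.span_le]
      intro y hy
      exact hT y hy
    have h2 : K ≤ K.comap (T : H →ₗ[ℂ] H) := by
      rw [hK]
      apply Submodule.topologicalClosure_minimal _ h1
      rw [Submodule.comap_coe]
      exact (Submodule.isClosed_topologicalClosure _).preimage T.continuous
    exact h2 hx
  have hcomm : ∀ T : H →L[ℂ] H, (∀ x ∈ K, T x ∈ K) → (∀ x ∈ K, star T x ∈ K) →
      T * C = C * T := by
    intro T hTK hTsK
    ext h
    have hk : (K.orthogonalProjectionOnto h : H) ∈ K := Submodule.coe_mem _
    have hm : h - (K.orthogonalProjectionOnto h : H) ∈ Kᗮ :=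
      Submodule.sub_starProjection_mem_orthogonal h
    have hTm : T (h - (K.orthogonalProjectionOnto h : H)) ∈ Kᗮ := by
      rw [Submodule.mem_orthogonal]
      intro u hu
      have h1 : (inner ℂ u (T (h - (K.orthogonalProjectionOnto h : H))) : ℂ)
          = inner ℂ (star T u) (h - (K.orthogonalProjectionOnto h : H)) := by
        conv_lhs => rw [← ContinuousLinearMap.adjoint_adjoint T]
        rw [ContinuousLinearMap.adjoint_inner_right, ContinuousLinearMap.star_eq_adjoint]
      rw [h1]
      exact (Submodule.mem_orthogonal K _).mp hm _ (hTsK u hu)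
    have hdec : T h = T (K.orthogonalProjectionOnto h : H)
        + T (h - (K.orthogonalProjectionOnto h : H)) := by
      rw [← map_add]
      congr 1
      abel
    show T (C h) = C (T h)
    rw [hCapply, hdec, map_add, hCfix _ (hTK _ hk), hCzero _ hTm, add_zero]
  have hCsq : C * C = C := by
    ext h
    show C (C h) = C h
    exact hCfix _ (hChmem h)
  have hCstar : star C = C := by
    rw [hC]; exact isSelfAdjoint_starProjection K
  have hCmem : C ∈ M := by
    rw [← SetLike.mem_coe, ← M.centralizer_centralizer]
    intro z hz
    have hzS : ∀ y ∈ S, z y ∈ K := by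
      rintro y ⟨X, hX, h, rfl⟩
      have h1 : (X * e) * z = z * (X * e) := hz _ (mul_mem hX he)
      have h2 : (X * e) (z h) = z ((X * e) h) := ContinuousLinearMap.ext_iff.mp h1 h
      rw [← h2]
      exact hmemK X hX (z h)
    have hzsS : ∀ y ∈ S, star z y ∈ K := by
      rintro y ⟨X, hX, h, rfl⟩
      have h1 : (star (X * e)) * z = z * star (X * e) := hz _ (star_mem (mul_mem hX he))
      have h2 := congrArg star h1
      simp only [star_mul, star_star] at h2
      have h3 : star z ((X * e) h) = (X * e) (star z h) :=
        ContinuousLinearMap.ext_iff.mp h2 h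
      rw [h3]
      exact hmemK X hX (star z h)
    exact hcomm z (hKinv z hzS) (hKinv (star z) hzsS)
  have hCcentral : ∀ A ∈ M, C * A = A * C := by
    intro A hA
    have hAS : ∀ y ∈ S, A y ∈ K := by
      rintro y ⟨X, hX, h, rfl⟩
      have h1 : A ((X * e) h) = ((A * X) * e) h := by
        rw [mul_assoc]; rfl
      rw [h1]
      exact hmemK _ (mul_mem hA hX) h
    have hAsS : ∀ y ∈ S, star A y ∈ K := by
      rintro y ⟨X, hX, h, rfl⟩
      have h1 : star A ((X * e) h) = ((star A * X) * e) h := by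
        rw [mul_assoc]; rfl
      rw [h1]
      exact hmemK _ (mul_mem (star_mem hA) hX) h
    exact (hcomm A (hKinv A hAS) (hKinv (star A) hAsS)).symm
  have hCe : C * e = e := by
    ext h
    show C (e h) = e h
    apply hCfix
    have := hmemK 1 (one_mem M) h
    rwa [one_mul] at this
  refine ⟨C, ⟨⟨hCmem, hCcentral⟩, hCsq, hCstar⟩, hCe, ?_⟩
  intro Z hZ
  ext h
  show Z (C h) = 0
  have hsub : K ≤ LinearMap.ker (Z : H →ₗ[ℂ] H) := by
    rw [hK]
    apply Submodule.topologicalClosure_minimal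
    · rw [Submodule.span_le]
      rintro y ⟨X, hX, h', rfl⟩
      have h0 : (Z * (X * e)) h' = 0 := by
        rw [hZ X hX]; exact rfl
      rw [ContinuousLinearMap.mul_apply] at h0
      simpa [LinearMap.mem_ker] using h0
    · exact ContinuousLinearMap.isClosed_ker Z
  have := hsub (hChmem h)
  simpa [LinearMap.mem_ker] using this

theorem xi_lie_offdiag_vanishing (M : VonNeumannAlgebra H) (P : H →L[ℂ] H)
    (hP : M.IsProjection P) (hcore : M.CoreZero P) (hcar : M.CarrierOne P)
    (ξ : ℂ) (hξ : ξ ≠ 1)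
    (L : (H →L[ℂ] H) → (H →L[ℂ] H))
    (hmaps : ∀ A ∈ M, L A ∈ M)
    (hadd : ∀ A ∈ M, ∀ B ∈ M, L (A + B) = L A + L B)
    (hcond : ∀ A ∈ M, ∀ B ∈ M, A * B = 0 →
      L (A * B - ξ • (B * A)) =
        (L A * B - ξ • (B * L A)) + (L B * A - ξ • (A * L B))) :
    P * L 1 * (1 - P) = 0 ∧ (1 - P) * L 1 * P = 0 ∧
    (1 - P) * L P * (1 - P) = 0 ∧ P * L (1 - P) * P = 0 := by
  obtain ⟨hPm, hPP, hPs⟩ := hP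
  have hξ1 : (1 : ℂ) - ξ ≠ 0 := sub_ne_zero.mpr (Ne.symm hξ)
  set q : H →L[ℂ] H := 1 - P with hq
  have hQm : q ∈ M := sub_mem (one_mem M) hPm
  have hpq : P * q = 0 := by rw [hq, mul_sub, mul_one, hPP, sub_self]
  have hqp : q * P = 0 := by rw [hq, sub_mul, one_mul, hPP, sub_self]
  have hqq : q * q = q := by rw [hq, sub_mul, one_mul, mul_sub, mul_one, hPP, sub_self, sub_zero]
  have hpp' : ∀ x : H →L[ℂ] H, P * (P * x) = P * x := fun x => by rw [← mul_assoc, hPP]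
  have hqq' : ∀ x : H →L[ℂ] H, q * (q * x) = q * x := fun x => by rw [← mul_assoc, hqq]
  have hpq' : ∀ x : H →L[ℂ] H, P * (q * x) = 0 := fun x => by rw [← mul_assoc, hpq, zero_mul]
  have hqp' : ∀ x : H →L[ℂ] H, q * (P * x) = 0 := fun x => by rw [← mul_assoc, hqp, zero_mul]
  have hsmem : ∀ (c : ℂ) (Y : H →L[ℂ] H), Y ∈ M → c • Y ∈ M := fun c Y hY =>
    M.toStarSubalgebra.smul_mem hY c
  have hL0 : L 0 = 0 := by
    have h := hadd 0 (zero_mem M) 0 (zero_mem M)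
    rw [add_zero] at h
    exact (left_eq_add.mp h)
  -- the basic identity from `P * q = 0`
  have e0 : (0 : H →L[ℂ] H)
      = (L P * q - ξ • (q * L P)) + (L q * P - ξ • (P * L q)) := by
    have h := hcond P hPm q hQm hpq
    rw [hpq, hqp] at h
    simp only [smul_zero, sub_zero, hL0] at h
    exact h
  -- corner computations of e0
  have c3 : q * (L P * q) = 0 := by
    have h := congrArg (fun y => q * y * q) e0
    simp only [mul_add, add_mul, mul_sub, sub_mul, mul_smul_comm, smul_mul_assoc, mul_assoc,
      hpp', hqq', hpq', hqp', hPP, hqq, hpq, hqp, mul_zero, zero_mul, smul_zero, mul_one,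
      one_mul, add_zero, zero_add, sub_zero, zero_sub] at h
    have h2 : (1 - ξ) • (q * (L P * q)) = 0 := by
      linear_combination (norm := module) -h
    exact (smul_eq_zero.mp h2).resolve_left hξ1
  have c4 : P * (L q * P) = 0 := by
    have h := congrArg (fun y => P * y * P) e0
    simp only [mul_add, add_mul, mul_sub, sub_mul, mul_smul_comm, smul_mul_assoc, mul_assoc,
      hpp', hqq', hpq', hqp', hPP, hqq, hpq, hqp, mul_zero, zero_mul, smul_zero, mul_one,
      one_mul, add_zero, zero_add, sub_zero, zero_sub] at h
    have h2 : (1 - ξ) • (P * (L q * P)) = 0 := by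
      linear_combination (norm := module) -h
    exact (smul_eq_zero.mp h2).resolve_left hξ1
  have e12 : P * (L P * q) = ξ • (P * (L q * q)) := by
    have h := congrArg (fun y => P * y * q) e0
    simp only [mul_add, add_mul, mul_sub, sub_mul, mul_smul_comm, smul_mul_assoc, mul_assoc,
      hpp', hqq', hpq', hqp', hPP, hqq, hpq, hqp, mul_zero, zero_mul, smul_zero, mul_one,
      one_mul, add_zero, zero_add, sub_zero, zero_sub] at h
    linear_combination (norm := module) -h
  have e21 : q * (L q * P) = ξ • (q * (L P * P)) := by
    have h := congrArg (fun y => q * y * P) e0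
    simp only [mul_add, add_mul, mul_sub, sub_mul, mul_smul_comm, smul_mul_assoc, mul_assoc,
      hpp', hqq', hpq', hqp', hPP, hqq, hpq, hqp, mul_zero, zero_mul, smul_zero, mul_one,
      one_mul, add_zero, zero_add, sub_zero, zero_sub] at h
    linear_combination (norm := module) -h
  -- applied versions
  have e12' : ∀ x : H →L[ℂ] H, P * (L P * (q * x)) = ξ • (P * (L q * (q * x))) := by
    intro x
    have h := congrArg (fun y => y * x) e12
    simpa only [mul_assoc, smul_mul_assoc] using h
  have e21' : ∀ x : H →L[ℂ] H, q * (L q * (P * x)) = ξ • (q * (L P * (P * x))) := by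
    intro x
    have h := congrArg (fun y => y * x) e21
    simpa only [mul_assoc, smul_mul_assoc] using h
  -- For E = P*X*q : two expressions for L(-(ξ • E))
  have hbqq : ∀ X ∈ M, q * (L (-(ξ • (P * (X * q)))) * q) = q * (L P * (P * (X * q))) := by
    intro X hX
    have hEm : P * (X * q) ∈ M := mul_mem hPm (mul_mem hX hQm)
    have h := hcond (P * (X * q)) hEm P hPm (by simp only [mul_assoc, hqp, mul_zero])
    have harg : (P * (X * q)) * P - ξ • (P * (P * (X * q))) = -(ξ • (P * (X * q))) := by
      simp only [mul_assoc, hqp, mul_zero, hpp', zero_sub]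
    rw [harg] at h
    have h2 := congrArg (fun y => q * y * q) h
    simp only [mul_add, add_mul, mul_sub, sub_mul, mul_smul_comm, smul_mul_assoc, mul_assoc,
      hpp', hqq', hpq', hqp', hPP, hqq, hpq, hqp, mul_zero, zero_mul, smul_zero, mul_one,
      one_mul, add_zero, zero_add, sub_zero, zero_sub] at h2
    linear_combination (norm := module) h2
  have haqq : ∀ X ∈ M, q * (L (-(ξ • (P * (X * q)))) * q)
      = ξ • (q * (L P * (P * (X * q))))
        + (q * (L (P * (X * q)) * q) - ξ • (q * (L (P * (X * q)) * q))) := by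
    intro X hX
    have hEm : P * (X * q) ∈ M := mul_mem hPm (mul_mem hX hQm)
    have h := hcond q hQm (P * (X * q)) hEm (hqp' _)
    have harg : q * (P * (X * q)) - ξ • ((P * (X * q)) * q) = -(ξ • (P * (X * q))) := by
      rw [hqp', mul_assoc, mul_assoc, hqq, zero_sub]
    rw [harg] at h
    have h2 := congrArg (fun y => q * y * q) h
    simp only [mul_add, add_mul, mul_sub, sub_mul, mul_smul_comm, smul_mul_assoc, mul_assoc,
      hpp', hqq', hpq', hqp', hPP, hqq, hpq, hqp, mul_zero, zero_mul, smul_zero, mul_one,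
      one_mul, add_zero, zero_add, sub_zero, zero_sub, e21'] at h2
    linear_combination (norm := module) h2
  have zeta : ∀ X ∈ M, q * (L (P * (X * q)) * q) = q * (L P * (P * (X * q))) := by
    intro X hX
    have h3 := (haqq X hX).symm.trans (hbqq X hX)
    have h4 : (1 - ξ) • (q * (L (P * (X * q)) * q))
        = (1 - ξ) • (q * (L P * (P * (X * q)))) := by
      linear_combination (norm := module) h3
    exact smul_right_injective _ hξ1 h4
  have key1 : ∀ X ∈ M, (1 + ξ) • (q * (L P * (P * (X * q)))) = 0 := by
    intro X hX
    have h5 := zeta ((-ξ) • X) (hsmem _ _ hX)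
    have harg : P * (((-ξ) • X) * q) = -(ξ • (P * (X * q))) := by
      rw [smul_mul_assoc, mul_smul_comm, neg_smul]
    rw [harg] at h5
    have h7 := (hbqq X hX).symm.trans h5
    simp only [mul_neg, mul_smul_comm, neg_neg] at h7
    linear_combination (norm := module) h7
  -- mirror, for E' = q*X*P
  have hbpp : ∀ X ∈ M, P * (L (-(ξ • (q * (X * P)))) * P) = P * (L q * (q * (X * P))) := by
    intro X hX
    have hEm : q * (X * P) ∈ M := mul_mem hQm (mul_mem hX hPm)
    have h := hcond (q * (X * P)) hEm q hQm (by simp only [mul_assoc, hpq, mul_zero])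
    have harg : (q * (X * P)) * q - ξ • (q * (q * (X * P))) = -(ξ • (q * (X * P))) := by
      simp only [mul_assoc, hpq, mul_zero, hqq', zero_sub]
    rw [harg] at h
    have h2 := congrArg (fun y => P * y * P) h
    simp only [mul_add, add_mul, mul_sub, sub_mul, mul_smul_comm, smul_mul_assoc, mul_assoc,
      hpp', hqq', hpq', hqp', hPP, hqq, hpq, hqp, mul_zero, zero_mul, smul_zero, mul_one,
      one_mul, add_zero, zero_add, sub_zero, zero_sub] at h2
    linear_combination (norm := module) h2
  have happ : ∀ X ∈ M, P * (L (-(ξ • (q * (X * P)))) * P)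
      = ξ • (P * (L q * (q * (X * P))))
        + (P * (L (q * (X * P)) * P) - ξ • (P * (L (q * (X * P)) * P))) := by
    intro X hX
    have hEm : q * (X * P) ∈ M := mul_mem hQm (mul_mem hX hPm)
    have h := hcond P hPm (q * (X * P)) hEm (hpq' _)
    have harg : P * (q * (X * P)) - ξ • ((q * (X * P)) * P) = -(ξ • (q * (X * P))) := by
      rw [hpq', mul_assoc, mul_assoc, hPP, zero_sub]
    rw [harg] at h
    have h2 := congrArg (fun y => P * y * P) h
    simp only [mul_add, add_mul, mul_sub, sub_mul, mul_smul_comm, smul_mul_assoc, mul_assoc,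
      hpp', hqq', hpq', hqp', hPP, hqq, hpq, hqp, mul_zero, zero_mul, smul_zero, mul_one,
      one_mul, add_zero, zero_add, sub_zero, zero_sub, e12'] at h2
    linear_combination (norm := module) h2
  have phi : ∀ X ∈ M, P * (L (q * (X * P)) * P) = P * (L q * (q * (X * P))) := by
    intro X hX
    have h3 := (happ X hX).symm.trans (hbpp X hX)
    have h4 : (1 - ξ) • (P * (L (q * (X * P)) * P))
        = (1 - ξ) • (P * (L q * (q * (X * P)))) := by
      linear_combination (norm := module) h3
    exact smul_right_injective _ hξ1 h4
  have key2 : ∀ X ∈ M, (1 + ξ) • (P * (L q * (q * (X * P)))) = 0 := by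
    intro X hX
    have h5 := phi ((-ξ) • X) (hsmem _ _ hX)
    have harg : q * (((-ξ) • X) * P) = -(ξ • (q * (X * P))) := by
      rw [smul_mul_assoc, mul_smul_comm, neg_smul]
    rw [harg] at h5
    have h7 := (hbpp X hX).symm.trans h5
    simp only [mul_neg, mul_smul_comm, neg_neg] at h7
    linear_combination (norm := module) h7
  -- kill the off-diagonal corners using core/carrier
  have hZ2 : (1 + ξ) • (P * (L q * q)) = 0 := by
    obtain ⟨C, hCcp, hCP, hCkill⟩ := M.exists_central_carrier P hPm
    have hC1 : C = 1 := hcar C hCcp hCP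
    have h := hCkill ((1 + ξ) • (P * (L q * q))) ?_
    · rwa [hC1, mul_one] at h
    · intro X hX
      have h9 : ((1 + ξ) • (P * (L q * q))) * (X * P)
          = (1 + ξ) • (P * (L q * (q * (X * P)))) := by
        simp only [smul_mul_assoc, mul_assoc]
      rw [h9]
      exact key2 X hX
  have hZ1 : (1 + ξ) • (q * (L P * P)) = 0 := by
    obtain ⟨C, hCcp, hCq, hCkill⟩ := M.exists_central_carrier q hQm
    have hRcp : M.IsCentralProjection (1 - C) := by
      obtain ⟨⟨hCm, hCc⟩, hCsq, hCst⟩ := hCcp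
      refine ⟨⟨sub_mem (one_mem M) hCm, fun A hA => ?_⟩, ?_, ?_⟩
      · rw [sub_mul, mul_sub, one_mul, mul_one, hCc A hA]
      · rw [sub_mul, one_mul, mul_sub, mul_one, hCsq, sub_self, sub_zero]
      · rw [star_sub, star_one, hCst]
    have hRP : (1 - C) * P = 1 - C := by
      have h8 := hCq
      rw [hq, mul_sub, mul_one] at h8
      rw [sub_mul, one_mul]
      linear_combination (norm := module) h8
    have hR0 := hcore (1 - C) hRcp hRP
    have hC1 : C = 1 := by
      have := sub_eq_zero.mp hR0
      exact this.symm
    have h := hCkill ((1 + ξ) • (q * (L P * P))) ?_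
    · rwa [hC1, mul_one] at h
    · intro X hX
      have h9 : ((1 + ξ) • (q * (L P * P))) * (X * q)
          = (1 + ξ) • (q * (L P * (P * (X * q)))) := by
        simp only [smul_mul_assoc, mul_assoc]
      rw [h9]
      exact key1 X hX
  -- assemble
  have hL1 : L 1 = L P + L q := by
    have hpq1 : P + q = 1 := by rw [hq]; abel
    have h := hadd P hPm q hQm
    rwa [hpq1] at h
  refine ⟨?_, ?_, ?_, ?_⟩
  · rw [mul_assoc, hL1, add_mul, mul_add, e12]
    linear_combination (norm := module) hZ2
  · rw [mul_assoc, hL1, add_mul, mul_add, e21]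
    linear_combination (norm := module) hZ1
  · rw [mul_assoc]; exact c3
  · rw [mul_assoc]; exact c4
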